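/- Let n ≥ 2 and u ∈ ℝ^n with u_n ≠ 0. Define the change of variables z ↦ (τ, σ) ∈ ℝ × ℝ^{n−1} by τ = (u·z)/|u| and σ = (u^{(n)} τ − |u| z^{(n)})/u_n, where z^{(n)}, u^{(n)} omit the n-th coordinate. Then the inverse map is given by z^{(n)} = (u^{(n)} τ − u_n σ)/|u| and z_n = (u_n τ + u^{(n)}·σ)/|u|, and the absolute value of the Jacobian determinant of z ↦ (τ,σ) equals (|u_n|/|u|)^{n−2}. -/

import Mathlib

open Matrix

/-- The forward change of variables `z ↦ (τ, σ)` along the direction of the `n`-th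
coordinate (here `n = d + 2`, encoded as a self-map of `ℝ^n` with `τ` placed in the last
coordinate and `σ` in the first `n - 1` coordinates):
`τ = (u·z)/|u|`, `σ = (u⁽ⁿ⁾ τ - |u| z⁽ⁿ⁾)/u_n`. -/
noncomputable def fwdChange (d : ℕ) (u : Fin (d + 2) → ℝ) :
    (Fin (d + 2) → ℝ) → (Fin (d + 2) → ℝ) := fun z j =>
  if j = Fin.last (d + 1) then
    (∑ i, u i * z i) / Real.sqrt (∑ i, u i ^ 2)
  else
    (u j * ((∑ i, u i * z i) / Real.sqrt (∑ i, u i ^ 2)) -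
        Real.sqrt (∑ i, u i ^ 2) * z j) / u (Fin.last (d + 1))

/-- The inverse change of variables `(τ, σ) ↦ z`:
`z⁽ⁿ⁾ = (u⁽ⁿ⁾ τ - u_n σ)/|u|`, `z_n = (u_n τ + u⁽ⁿ⁾·σ)/|u|`. -/
noncomputable def invChange (d : ℕ) (u : Fin (d + 2) → ℝ) :
    (Fin (d + 2) → ℝ) → (Fin (d + 2) → ℝ) := fun v j =>
  if j = Fin.last (d + 1) then
    (u (Fin.last (d + 1)) * v (Fin.last (d + 1)) +
        ∑ i : Fin (d + 1), u i.castSucc * v i.castSucc) / Real.sqrt (∑ i, u i ^ 2)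
  else
    (u j * v (Fin.last (d + 1)) - u (Fin.last (d + 1)) * v j) / Real.sqrt (∑ i, u i ^ 2)

/-- The matrix of the linear map `(τ, σ) ↦ z`. -/
noncomputable def invChangeMatrix (d : ℕ) (u : Fin (d + 2) → ℝ) :
    Matrix (Fin (d + 2)) (Fin (d + 2)) ℝ := fun j i =>
  if i = Fin.last (d + 1) then u j / Real.sqrt (∑ i, u i ^ 2)
  else if j = Fin.last (d + 1) then u i / Real.sqrt (∑ i, u i ^ 2)
  else if j = i then -(u (Fin.last (d + 1))) / Real.sqrt (∑ i, u i ^ 2)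
  else 0

/-- The maps `z ↦ (τ,σ)` and `(τ,σ) ↦ z` given by the displayed formulas are mutually
inverse, the inverse map is linear with matrix `invChangeMatrix`, and the absolute value
of the Jacobian determinant of the change of variables (i.e. of `(τ,σ) ↦ z`) equals
`(|u_n|/|u|)^{n-2}`. -/
private lemma sum_helper {m : ℕ} (f g : Fin m → ℝ) (a b c : ℝ) :
    ∑ i, f i * ((f i * a - b * g i) / c) =
      ((∑ i, f i ^ 2) * a - b * ∑ i, f i * g i) / c := by
  have h : ((∑ i, f i ^ 2) * a - b * ∑ i, f i * g i) / c =
      ∑ i, (f i ^ 2 * a - b * (f i * g i)) / c := by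
    rw [Finset.sum_mul, Finset.mul_sum, ← Finset.sum_sub_distrib, Finset.sum_div]
  rw [h]
  exact Finset.sum_congr rfl fun i _ => by ring

theorem change_of_variables_jacobian (d : ℕ) (u : Fin (d + 2) → ℝ)
    (hu : u (Fin.last (d + 1)) ≠ 0) :
    (∀ z, invChange d u (fwdChange d u z) = z) ∧
    (∀ v, fwdChange d u (invChange d u v) = v) ∧
    (∀ v, invChange d u v = (invChangeMatrix d u).mulVec v) ∧
    |(invChangeMatrix d u).det| =
      (|u (Fin.last (d + 1))| / Real.sqrt (∑ i, u i ^ 2)) ^ d := by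
  set S := Real.sqrt (∑ i, u i ^ 2) with hSdef
  have hpos : 0 < ∑ i, u i ^ 2 := by
    have h1 : u (Fin.last (d + 1)) ^ 2 ≤ ∑ i, u i ^ 2 :=
      Finset.single_le_sum (f := fun i => u i ^ 2) (fun i _ => sq_nonneg _) (Finset.mem_univ _)
    have h0 : 0 < u (Fin.last (d + 1)) ^ 2 :=
      lt_of_le_of_ne (sq_nonneg _) (Ne.symm (pow_ne_zero 2 hu))
    linarith
  have hS : 0 < S := Real.sqrt_pos.mpr hpos
  have hS0 : S ≠ 0 := hS.ne'
  have hS2 : S ^ 2 = ∑ i, u i ^ 2 := Real.sq_sqrt hpos.le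
  have hsplit : S ^ 2 = (∑ i : Fin (d + 1), u i.castSucc ^ 2) + u (Fin.last (d + 1)) ^ 2 := by
    rw [hS2, Fin.sum_univ_castSucc]
  have hT : (∑ i : Fin (d + 1), u i.castSucc ^ 2) = S ^ 2 - u (Fin.last (d + 1)) ^ 2 := by
    linarith
  have hne : ∀ i : Fin (d + 1), i.castSucc ≠ Fin.last (d + 1) := fun i =>
    Fin.ne_of_lt (Fin.castSucc_lt_last i)
  refine ⟨?_, ?_, ?_, ?_⟩
  · -- invChange ∘ fwdChange = id
    intro z
    funext j
    by_cases hj : j = Fin.last (d + 1)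
    · subst hj
      simp only [invChange, fwdChange, if_pos, hne, if_neg, ← hSdef, ite_true, ite_false,
        eq_self_iff_true, if_false, if_true, ne_eq, not_false_eq_true]
      rw [sum_helper]
      rw [Fin.sum_univ_castSucc (f := fun i => u i * z i)]
      rw [hT]
      field_simp
      ring
    · simp only [invChange, fwdChange, ← hSdef]
      rw [if_neg hj, if_neg hj]
      rw [if_pos trivial]
      field_simp
      ring
  · -- fwdChange ∘ invChange = id
    intro v
    have hτ : ∑ i, u i * invChange d u v i = S * v (Fin.last (d + 1)) := by
      rw [Fin.sum_univ_castSucc (f := fun i => u i * invChange d u v i)]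
      simp only [invChange, hne, ← hSdef, ite_true, ite_false, eq_self_iff_true, if_false,
        if_true, ne_eq, not_false_eq_true, if_neg, if_pos]
      rw [sum_helper, hT]
      field_simp
      ring
    funext j
    by_cases hj : j = Fin.last (d + 1)
    · subst hj
      simp only [fwdChange, ← hSdef]
      rw [if_pos trivial, hτ]
      exact mul_div_cancel_left₀ _ hS0
    · simp only [fwdChange, ← hSdef]
      rw [if_neg hj, hτ]
      simp only [invChange, ← hSdef]
      rw [if_neg hj]
      field_simp
      ring
  · -- matrix form
    intro v
    funext j
    simp only [Matrix.mulVec, dotProduct, invChangeMatrix, invChange, ← hSdef]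
    by_cases hj : j = Fin.last (d + 1)
    · subst hj
      rw [if_pos rfl, Fin.sum_univ_castSucc
        (f := fun i => (if i = Fin.last (d + 1) then u (Fin.last (d + 1)) / S
          else if Fin.last (d + 1) = Fin.last (d + 1) then u i / S
          else if Fin.last (d + 1) = i then -(u (Fin.last (d + 1))) / S else 0) * v i)]
      simp only [hne, ite_true, ite_false, eq_self_iff_true, if_false, if_true, ne_eq,
        not_false_eq_true, if_neg, if_pos]
      have h2 : ∑ i : Fin (d + 1), u i.castSucc / S * v i.castSucc =
          (∑ i : Fin (d + 1), u i.castSucc * v i.castSucc) / S := by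
        rw [Finset.sum_div]; exact Finset.sum_congr rfl fun i _ => by ring
      rw [h2]
      field_simp
      ring
    · rw [if_neg hj]
      have hsum : ∀ i : Fin (d + 2),
          (if i = Fin.last (d + 1) then u j / S
            else if j = Fin.last (d + 1) then u i / S
            else if j = i then -(u (Fin.last (d + 1))) / S else 0) * v i =
          (if i = Fin.last (d + 1) then u j / S * v i else 0) +
          (if i = j then -(u (Fin.last (d + 1))) / S * v i else 0) := by
        intro i
        by_cases h1 : i = Fin.last (d + 1)
        · subst h1
          rw [if_pos rfl, if_pos rfl, if_neg (fun h => hj h.symm), add_zero]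
        · rw [if_neg h1, if_neg h1, if_neg hj]
          by_cases h2 : j = i
          · rw [if_pos h2, if_pos h2.symm, zero_add]
          · rw [if_neg h2, if_neg (fun h => h2 h.symm), add_zero, zero_mul]
      rw [Finset.sum_congr rfl fun i _ => hsum i, Finset.sum_add_distrib,
        Finset.sum_ite_eq' Finset.univ, Finset.sum_ite_eq' Finset.univ]
      simp only [Finset.mem_univ, if_pos]
      field_simp
      ring
  · -- determinant
    set c : ℝ := -(u (Fin.last (d + 1))) / S with hcdef
    have hc : c ≠ 0 := div_ne_zero (neg_ne_zero.mpr hu) hS0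
    have hcastAdd : ∀ j : Fin (d + 1), (Fin.castAdd 1 j : Fin (d + 2)) = j.castSucc :=
      fun _ => rfl
    have hnatAdd : ∀ i : Fin 1, (Fin.natAdd (d + 1) i : Fin (d + 2)) = Fin.last (d + 1) := by
      intro i
      have : i = 0 := Subsingleton.elim i 0
      subst this
      rfl
    have hmain : (invChangeMatrix d u).submatrix
          (finSumFinEquiv (m := d + 1) (n := 1)) (finSumFinEquiv (m := d + 1) (n := 1)) =
        fromBlocks (c • (1 : Matrix (Fin (d + 1)) (Fin (d + 1)) ℝ))
          (Matrix.of fun i (_ : Fin 1) => u i.castSucc / S)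
          (Matrix.of fun (_ : Fin 1) k => u k.castSucc / S)
          (Matrix.of fun (_ : Fin 1) (_ : Fin 1) => u (Fin.last (d + 1)) / S) := by
      ext jj ii
      rcases jj with j | j <;> rcases ii with i | i <;>
        simp only [submatrix_apply, finSumFinEquiv_apply_left, finSumFinEquiv_apply_right,
          hcastAdd, hnatAdd, invChangeMatrix, ← hSdef, fromBlocks_apply₁₁, fromBlocks_apply₁₂,
          fromBlocks_apply₂₁, fromBlocks_apply₂₂, Matrix.smul_apply, Matrix.one_apply,
          Matrix.of_apply, hne, ite_true, ite_false, eq_self_iff_true, if_true, if_false,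
          ne_eq, not_false_eq_true, if_neg, if_pos, Fin.castSucc_inj, smul_eq_mul, mul_ite,
          mul_one, mul_zero, hcdef]
    have hright : (c • (1 : Matrix (Fin (d + 1)) (Fin (d + 1)) ℝ)) * (c⁻¹ • 1) = 1 := by
      rw [Matrix.smul_mul, Matrix.one_mul, smul_smul, mul_inv_cancel₀ hc, one_smul]
    have hleft : (c⁻¹ • (1 : Matrix (Fin (d + 1)) (Fin (d + 1)) ℝ)) * (c • 1) = 1 := by
      rw [Matrix.smul_mul, Matrix.one_mul, smul_smul, inv_mul_cancel₀ hc, one_smul]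
    haveI : Invertible (c • (1 : Matrix (Fin (d + 1)) (Fin (d + 1)) ℝ)) :=
      ⟨c⁻¹ • 1, hleft, hright⟩
    have hinv : ⅟(c • (1 : Matrix (Fin (d + 1)) (Fin (d + 1)) ℝ)) = c⁻¹ • 1 :=
      invOf_eq_right_inv hright
    have hdet : (invChangeMatrix d u).det = c ^ (d + 1) * (S / u (Fin.last (d + 1))) := by
      rw [← Matrix.det_submatrix_equiv_self (finSumFinEquiv (m := d + 1) (n := 1)), hmain,
        Matrix.det_fromBlocks₁₁, hinv]
      have h1 : (c • (1 : Matrix (Fin (d + 1)) (Fin (d + 1)) ℝ)).det = c ^ (d + 1) := by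
        simp [Matrix.det_smul, Fintype.card_fin]
      rw [h1, Matrix.det_fin_one]
      congr 1
      simp only [Matrix.sub_apply, Matrix.mul_apply, Matrix.smul_apply, Matrix.one_apply,
        Matrix.of_apply, Finset.univ_unique, Finset.sum_singleton, smul_eq_mul, mul_ite,
        mul_one, mul_zero]
      have h2 : ∀ x : Fin (d + 1),
          (∑ x_1 : Fin (d + 1), if x_1 = x then u x_1.castSucc / S * c⁻¹ else 0) =
            u x.castSucc / S * c⁻¹ := by
        intro x
        rw [Finset.sum_ite_eq' Finset.univ]
        simp
      simp only [h2]
      have h4 : ∑ x : Fin (d + 1), u x.castSucc / S * c⁻¹ * (u x.castSucc / S) =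
          c⁻¹ * ((S ^ 2 - u (Fin.last (d + 1)) ^ 2) / S ^ 2) := by
        rw [← hT, Finset.sum_div, Finset.mul_sum]
        exact Finset.sum_congr rfl fun k _ => by ring
      rw [h4, hcdef]
      field_simp
      ring
    rw [hdet, abs_mul, abs_pow, abs_div, abs_div, abs_neg, abs_of_pos hS]
    rw [pow_succ, mul_assoc]
    have hA : |u (Fin.last (d + 1))| ≠ 0 := abs_ne_zero.mpr hu
    have h3 : |u (Fin.last (d + 1))| / S * (S / |u (Fin.last (d + 1))|) = 1 := by
      field_simp
    rw [h3, mul_one]
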